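/- Fix d ≥ 1 and α > 0, and suppose (Y_n)_{n≥1} are differentiable real functions on an interval I satisfying Y_n'(t) = 2^d·2^{(α−d/2)n} Y_{n−1}(t)² − 2^d·2^{(α−d/2)(n+1)} Y_n(t) Y_{n+1}(t) for all n ≥ 1, with Y_0 ≡ 0. Define X_j(t) := 2^{−d|j|/2} Y_{|j|}(t) for every word j ∈ J (nonempty) and X for the root via Y at level 0. Then (X_j)_{j∈J} is a componentwise solution of the unforced inviscid KP tree model with coefficients c_j = 2^{α|j|}, and moreover Σ_{j∈J} X_j(t)² = Σ_{n} Y_n(t)² for every t ∈ I. -/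

import Mathlib

open Set

namespace Stmt10

/-- Nodes of the `2^d`-ary tree: finite words over an alphabet with `2^d` letters.
The root is the empty word, the parent of `a :: j` is `j`, and the children of `j`
are the words `a :: j` for `a : Fin (2^d)`. -/
abbrev Word (d : ℕ) := List (Fin (2 ^ d))

/-- The coefficient `c_j = 2^(α |j|)`. -/
noncomputable def coef (α : ℝ) {d : ℕ} (j : Word d) : ℝ := (2 : ℝ) ^ (α * (j.length : ℝ))

/-- The value at the parent node, with the convention that the (fictitious) parent of the
root carries the value `f`. -/
def parentVal {d : ℕ} (f : ℝ) (X : Word d → ℝ) : Word d → ℝ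
  | [] => f
  | _ :: j => X j

/-- The lift `X_j(t) = 2^(−d|j|/2) Y_{|j|}(t)` of a shell family to the tree
(the root, of level `0`, is given by `Y` at level `0`). -/
noncomputable def liftX (d : ℕ) (Y : ℕ → ℝ → ℝ) (j : Word d) (t : ℝ) : ℝ :=
  (2 : ℝ) ^ (-((d : ℝ) * (j.length : ℝ)) / 2) * Y j.length t

lemma two_rpow_sq (x : ℝ) : ((2 : ℝ) ^ x) ^ 2 = (2 : ℝ) ^ (x + x) := by
  rw [Real.rpow_add two_pos, sq]

lemma card_mul_rpow (d n : ℕ) :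
    (((2 ^ d) ^ n : ℕ) : ℝ) * (2 : ℝ) ^ (-((d : ℝ) * (n : ℝ))) = 1 := by
  have : (((2 ^ d) ^ n : ℕ) : ℝ) = (2 : ℝ) ^ ((d : ℝ) * (n : ℝ)) := by
    push_cast
    rw [← pow_mul, ← Real.rpow_natCast 2 (d * n)]
    push_cast; ring_nf
  rw [this, ← Real.rpow_add two_pos]
  simp


/-- Fix `d ≥ 1`, `α > 0`, and suppose `(Y_n)_{n≥1}` solve the shell system
`Y_n' = 2^d·2^((α−d/2)n) Y_{n−1}² − 2^d·2^((α−d/2)(n+1)) Y_n Y_{n+1}` on an interval `I`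
(with `Y_0 ≡ 0`). Then `X_j(t) := 2^(−d|j|/2) Y_{|j|}(t)` is a componentwise solution of
the unforced inviscid KP tree model with coefficients `c_j = 2^(α|j|)`, and the energies
coincide: `Σ_{j∈J} X_j(t)² = Σ_n Y_n(t)²` for every `t ∈ I`. -/
theorem dn_lifts_to_kp (d : ℕ) (hd : 1 ≤ d) (α : ℝ) (hα : 0 < α) (I : Set ℝ)
    (Y : ℕ → ℝ → ℝ) (hY0 : ∀ t, Y 0 t = 0)
    (hY : ∀ n : ℕ, 1 ≤ n → ∀ t ∈ I,
      HasDerivWithinAt (Y n)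
        ((2 : ℝ) ^ (d : ℝ) * (2 : ℝ) ^ ((α - (d : ℝ) / 2) * (n : ℝ)) * (Y (n - 1) t) ^ 2
          - (2 : ℝ) ^ (d : ℝ) * (2 : ℝ) ^ ((α - (d : ℝ) / 2) * ((n : ℝ) + 1))
            * Y n t * Y (n + 1) t)
        I t) :
    (∀ j : Word d, ∀ t ∈ I,
      HasDerivWithinAt (fun s => liftX d Y j s)
        (coef α j * (parentVal 0 (fun i => liftX d Y i t) j) ^ 2
          - liftX d Y j t * ∑ a : Fin (2 ^ d), coef α (a :: j) * liftX d Y (a :: j) t)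
        I t) ∧
    (∀ t ∈ I, ∑' j : Word d, (liftX d Y j t) ^ 2 = ∑' n : ℕ, (Y n t) ^ 2) := by
  constructor
  · rintro (_ | ⟨a, l⟩) t ht
    · -- root case
      have hfun : (fun s => liftX d Y ([] : Word d) s) = fun _ => (0 : ℝ) := by
        funext s; simp [liftX, hY0]
      have hx : liftX d Y ([] : Word d) t = 0 := by simp [liftX, hY0]
      rw [hfun]
      have : (coef α ([] : Word d) * (parentVal 0 (fun i => liftX d Y i t) ([] : Word d)) ^ 2
          - liftX d Y ([] : Word d) t
            * ∑ a : Fin (2 ^ d), coef α (a :: ([] : Word d)) * liftX d Y (a :: ([] : Word d)) t)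
          = 0 := by
        simp [parentVal, hx]
      rw [this]
      exact hasDerivWithinAt_const t I 0
    · -- non-root case
      set n := l.length with hn
      have hfun : (fun s => liftX d Y (a :: l) s)
          = fun s => (2 : ℝ) ^ (-((d : ℝ) * ((n : ℝ) + 1)) / 2) * Y (n + 1) s := by
        funext s; simp only [liftX, List.length_cons]; push_cast; try ring_nf
        rfl
      have hder := (hY (n + 1) (by omega) t ht).const_mul
        ((2 : ℝ) ^ (-((d : ℝ) * ((n : ℝ) + 1)) / 2))
      rw [hfun]
      convert hder using 1
      case e'_4 => rfl
      case e'_5 => rfl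
      -- now prove the RHS identity
      have hterm : ∀ b : Fin (2 ^ d), coef α (b :: a :: l) * liftX d Y (b :: a :: l) t
          = (2 : ℝ) ^ (α * ((n : ℝ) + 2))
              * ((2 : ℝ) ^ (-((d : ℝ) * ((n : ℝ) + 2)) / 2) * Y (n + 2) t) := by
        intro b
        simp only [coef, liftX, List.length_cons]
        push_cast
        ring_nf
        rw [← hn]
        ring_nf
      have hsum : (∑ b : Fin (2 ^ d), coef α (b :: a :: l) * liftX d Y (b :: a :: l) t)
          = ((2 ^ d : ℕ) : ℝ) * ((2 : ℝ) ^ (α * ((n : ℝ) + 2))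
              * ((2 : ℝ) ^ (-((d : ℝ) * ((n : ℝ) + 2)) / 2) * Y (n + 2) t)) := by
        rw [Finset.sum_congr rfl (fun b _ => hterm b), Finset.sum_const, Finset.card_univ,
          Fintype.card_fin, nsmul_eq_mul]
      have hcast : ((2 ^ d : ℕ) : ℝ) = (2 : ℝ) ^ (d : ℝ) := by
        push_cast
        rw [← Real.rpow_natCast 2 d]
      have hcoef : coef α (a :: l) = (2 : ℝ) ^ (α * ((n : ℝ) + 1)) := by
        simp only [coef, List.length_cons]; push_cast; try ring_nf
        rfl
      have hpar : parentVal 0 (fun i => liftX d Y i t) (a :: l)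
          = (2 : ℝ) ^ (-((d : ℝ) * (n : ℝ)) / 2) * Y n t := by
        simp [parentVal, liftX]
        rfl
      have hx : liftX d Y (a :: l) t
          = (2 : ℝ) ^ (-((d : ℝ) * ((n : ℝ) + 1)) / 2) * Y (n + 1) t := by
        simp only [liftX, List.length_cons]; push_cast; try ring_nf
        rfl
      rw [hsum, hcast, hcoef, hpar, hx]
      have e1 : (2 : ℝ) ^ (α * ((n : ℝ) + 1)) * ((2 : ℝ) ^ (-((d : ℝ) * (n : ℝ)) / 2)) ^ 2
          = (2 : ℝ) ^ (-((d : ℝ) * ((n : ℝ) + 1)) / 2) * ((2 : ℝ) ^ (d : ℝ)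
              * (2 : ℝ) ^ ((α - (d : ℝ) / 2) * (((n : ℝ) + 1)))) := by
        rw [two_rpow_sq, ← Real.rpow_add two_pos, ← Real.rpow_add two_pos,
          ← Real.rpow_add two_pos]
        congr 1; ring
      have e2 : (2 : ℝ) ^ (-((d : ℝ) * ((n : ℝ) + 1)) / 2) * ((2 : ℝ) ^ (d : ℝ)
            * ((2 : ℝ) ^ (α * ((n : ℝ) + 2)) * (2 : ℝ) ^ (-((d : ℝ) * ((n : ℝ) + 2)) / 2)))
          = (2 : ℝ) ^ (-((d : ℝ) * ((n : ℝ) + 1)) / 2) * ((2 : ℝ) ^ (d : ℝ)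
              * (2 : ℝ) ^ ((α - (d : ℝ) / 2) * (((n : ℝ) + 1) + 1))) := by
        rw [← Real.rpow_add two_pos (α * ((n : ℝ) + 2))]
        congr 3; ring
      simp only [Nat.add_sub_cancel]
      push_cast
      linear_combination (Y n t) ^ 2 * e1 - Y (n + 1) t * Y (n + 2) t * e2
  · intro t ht
    have hnn : ∀ p : (m : ℕ) × (Fin m → Fin (2 ^ d)),
        (0 : ℝ) ≤ (liftX d Y (List.equivSigmaTuple.symm p) t) ^ 2 := fun p => sq_nonneg _
    have hlen : ∀ p : (m : ℕ) × (Fin m → Fin (2 ^ d)),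
        (List.equivSigmaTuple.symm p : Word d).length = p.1 := by
      rintro ⟨m, v⟩
      simp [List.equivSigmaTuple]
    have hfib : ∀ m : ℕ, ∀ v : Fin m → Fin (2 ^ d),
        (liftX d Y (List.equivSigmaTuple.symm ⟨m, v⟩) t) ^ 2
          = (2 : ℝ) ^ (-((d : ℝ) * (m : ℝ))) * (Y m t) ^ 2 := by
      intro m v
      rw [liftX, hlen ⟨m, v⟩, mul_pow, two_rpow_sq]
      congr 2; ring
    have hfibsum : ∀ m : ℕ,
        (∑' v : Fin m → Fin (2 ^ d), (liftX d Y (List.equivSigmaTuple.symm ⟨m, v⟩) t) ^ 2)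
          = (Y m t) ^ 2 := by
      intro m
      have : (∑' v : Fin m → Fin (2 ^ d), (liftX d Y (List.equivSigmaTuple.symm ⟨m, v⟩) t) ^ 2)
          = ∑' _ : Fin m → Fin (2 ^ d), (2 : ℝ) ^ (-((d : ℝ) * (m : ℝ))) * (Y m t) ^ 2 := by
        exact tsum_congr (fun v => hfib m v)
      rw [this, tsum_const, Nat.card_eq_fintype_card, Fintype.card_fun, Fintype.card_fin,
        Fintype.card_fin, nsmul_eq_mul, ← mul_assoc, card_mul_rpow, one_mul]
    rw [← Equiv.tsum_eq List.equivSigmaTuple.symm (fun j => (liftX d Y j t) ^ 2)]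
    by_cases hs : Summable fun n : ℕ => (Y n t) ^ 2
    · have hsig : Summable fun p : (m : ℕ) × (Fin m → Fin (2 ^ d)) =>
          (liftX d Y (List.equivSigmaTuple.symm p) t) ^ 2 := by
        rw [summable_sigma_of_nonneg hnn]
        refine ⟨fun m => Summable.of_finite, ?_⟩
        simpa only [hfibsum] using hs
      rw [Summable.tsum_sigma' (fun m => Summable.of_finite) hsig]
      exact tsum_congr hfibsum
    · rw [tsum_eq_zero_of_not_summable hs, tsum_eq_zero_of_not_summable]
      intro hsig
      exact hs (by simpa only [hfibsum] using ((summable_sigma_of_nonneg hnn).mp hsig).2)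

end Stmt10
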